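/- Let k_1, k_2 ≥ 4 be even integers. The following sequence of ℚ-vector spaces is exact: 0 → V_{k_1−1,k_2−1}^ℚ[I_D] → V_{k_1,k_2}^ℚ[I_D] → W_{k_1+k_2−2}^ℚ → 0, where the first map is multiplication by (X_1−X_2), i.e. P(X_1,X_2) ↦ (X_1−X_2)·P(X_1,X_2), and the second map is restriction to the diagonal, i.e. P(X_1,X_2) ↦ P(Z,Z) as a polynomial in the single variable Z. -/

import Mathlib

open MvPolynomial

noncomputable section

/-- `S = (0 −1; 1 0)`. -/
def Smat : Matrix (Fin 2) (Fin 2) ℤ := !![0, -1; 1, 0]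

/-- `T = (1 1; 0 1)`. -/
def Tmat : Matrix (Fin 2) (Fin 2) ℤ := !![1, 1; 0, 1]

/-- `U = (0 1; −1 1)`. -/
def Umat : Matrix (Fin 2) (Fin 2) ℤ := !![0, 1; -1, 1]

variable {R : Type*} [CommRing R]

/-- The slash action of a pair `(A,B)` of integral `2×2` matrices on a polynomial in the
two variables `X 0, X 1`, with weight exponents `w₁` on `X 0` and `w₂` on `X 1`:
monomials `X 0^{e₀} X 1^{e₁}` are sent to
`(a X₀+b)^{e₀}(c X₀+d)^{w₁−e₀} · (a' X₁+b')^{e₁}(c' X₁+d')^{w₂−e₁}`; for polynomials of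
degree `≤ wⱼ` in `X j` this is `(cX₀+d)^{w₁}(c'X₁+d')^{w₂} P((aX₀+b)/(cX₀+d),(a'X₁+b')/(c'X₁+d'))`. -/
def slash2 (w₁ w₂ : ℕ) (A B : Matrix (Fin 2) (Fin 2) ℤ) (P : MvPolynomial (Fin 2) R) :
    MvPolynomial (Fin 2) R :=
  ∑ e ∈ P.support, MvPolynomial.C (MvPolynomial.coeff e P) *
    ((C ((A 0 0 : ℤ) : R) * X 0 + C ((A 0 1 : ℤ) : R)) ^ (e 0) *
      (C ((A 1 0 : ℤ) : R) * X 0 + C ((A 1 1 : ℤ) : R)) ^ (w₁ - e 0)) *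
    ((C ((B 0 0 : ℤ) : R) * X 1 + C ((B 0 1 : ℤ) : R)) ^ (e 1) *
      (C ((B 1 0 : ℤ) : R) * X 1 + C ((B 1 1 : ℤ) : R)) ^ (w₂ - e 1))

/-- The slash action of a single matrix `A` on the variable `X j` (with weight exponent `w`),
leaving the other variable untouched. -/
def slashVar (j : Fin 2) (w : ℕ) (A : Matrix (Fin 2) (Fin 2) ℤ)
    (P : MvPolynomial (Fin 2) R) : MvPolynomial (Fin 2) R :=
  if j = 0 then slash2 w 0 A 1 P else slash2 0 w 1 A P

/-- `P ∈ V_{k₁,k₂}`: degrees at most `k₁−2` in `X 0` and `k₂−2` in `X 1`. -/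
def memV2 (k₁ k₂ : ℕ) (P : MvPolynomial (Fin 2) R) : Prop :=
  MvPolynomial.degreeOf 0 P ≤ k₁ - 2 ∧ MvPolynomial.degreeOf 1 P ≤ k₂ - 2

/-- `P` involves only the variable `X j`. -/
def onlyVar (j : Fin 2) (P : MvPolynomial (Fin 2) R) : Prop :=
  ∀ i : Fin 2, i ≠ j → MvPolynomial.degreeOf i P = 0

/-- `P` is an element of `W_k` in the single variable `X j`: a polynomial of degree `≤ k−2`
in `X j` alone with `P|_{1+S} = 0` and `P|_{1+U+U²} = 0`. -/
def memW1 (j : Fin 2) (k : ℕ) (P : MvPolynomial (Fin 2) R) : Prop :=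
  onlyVar j P ∧ MvPolynomial.degreeOf j P ≤ k - 2 ∧
    P + slashVar j (k - 2) Smat P = 0 ∧
    P + slashVar j (k - 2) Umat P + slashVar j (k - 2) (Umat * Umat) P = 0

/-- `P ∈ V_{k₁,k₂}[I_D]`: `P|_{(1,1)+(S,S)} = 0` and `P|_{(1,1)+(U,U)+(U²,U²)} = 0`. -/
def memVID (k₁ k₂ : ℕ) (P : MvPolynomial (Fin 2) R) : Prop :=
  memV2 k₁ k₂ P ∧
    P + slash2 (k₁ - 2) (k₂ - 2) Smat Smat P = 0 ∧
    P + slash2 (k₁ - 2) (k₂ - 2) Umat Umat P +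
      slash2 (k₁ - 2) (k₂ - 2) (Umat * Umat) (Umat * Umat) P = 0

/-- `P ∈ W_{k₁,k₂}`: the five defining relations. -/
def memW2 (k₁ k₂ : ℕ) (P : MvPolynomial (Fin 2) R) : Prop :=
  memV2 k₁ k₂ P ∧
    (P + slash2 (k₁-2) (k₂-2) Smat 1 P + slash2 (k₁-2) (k₂-2) 1 Smat P +
      slash2 (k₁-2) (k₂-2) Smat Smat P = 0) ∧
    (P + slash2 (k₁-2) (k₂-2) Umat 1 P + slash2 (k₁-2) (k₂-2) (Umat*Umat) 1 P +
      slash2 (k₁-2) (k₂-2) Smat Smat P + slash2 (k₁-2) (k₂-2) (Smat*Umat) Smat P +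
      slash2 (k₁-2) (k₂-2) (Smat*(Umat*Umat)) Smat P = 0) ∧
    (P + slash2 (k₁-2) (k₂-2) 1 Umat P + slash2 (k₁-2) (k₂-2) 1 (Umat*Umat) P +
      slash2 (k₁-2) (k₂-2) Smat Smat P + slash2 (k₁-2) (k₂-2) Smat (Smat*Umat) P +
      slash2 (k₁-2) (k₂-2) Smat (Smat*(Umat*Umat)) P = 0) ∧
    (P + slash2 (k₁-2) (k₂-2) 1 Umat P + slash2 (k₁-2) (k₂-2) 1 (Umat*Umat) P +
      slash2 (k₁-2) (k₂-2) Umat 1 P + slash2 (k₁-2) (k₂-2) Umat Umat P +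
      slash2 (k₁-2) (k₂-2) Umat (Umat*Umat) P + slash2 (k₁-2) (k₂-2) (Umat*Umat) 1 P +
      slash2 (k₁-2) (k₂-2) (Umat*Umat) Umat P +
      slash2 (k₁-2) (k₂-2) (Umat*Umat) (Umat*Umat) P = 0) ∧
    (slash2 (k₁-2) (k₂-2) Smat Smat P + slash2 (k₁-2) (k₂-2) Smat (Smat*(Umat*Umat)) P +
      slash2 (k₁-2) (k₂-2) (Smat*(Umat*Umat)) (Smat*(Umat*Umat)) P +
      slash2 (k₁-2) (k₂-2) 1 (Umat*Umat) P - slash2 (k₁-2) (k₂-2) Umat Umat P = 0)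

/-- Restriction to the diagonal: `P(X₁,X₂) ↦ P(Z,Z)`, the single variable `Z` being `X 0`. -/
def diagRes (P : MvPolynomial (Fin 2) ℚ) : MvPolynomial (Fin 2) ℚ :=
  MvPolynomial.rename (fun _ => (0 : Fin 2)) P


namespace Aux17

abbrev P2 := MvPolynomial (Fin 2) ℚ
abbrev P4 := MvPolynomial (Fin 4) ℚ
abbrev P6 := MvPolynomial (Fin 6) ℚ

def pr : P4 →ₐ[ℚ] P2 := aeval ![X 0, 1, X 1, 1]

def hm (w₁ w₂ : ℕ) (P : P2) : P4 :=
  (AddMonoidAlgebra.coeff P).sum fun e c => C c * (X 0 ^ e 0 * X 1 ^ (w₁ - e 0) * X 2 ^ e 1 * X 3 ^ (w₂ - e 1))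

lemma hm_add (w₁ w₂ : ℕ) (P Q : P2) : hm w₁ w₂ (P + Q) = hm w₁ w₂ P + hm w₁ w₂ Q := by
  unfold hm
  exact Finsupp.sum_add_index' (fun e => by simp) (fun e c₁ c₂ => by rw [map_add, add_mul])

lemma hm_zero (w₁ w₂ : ℕ) : hm w₁ w₂ 0 = 0 := by simp [hm]

lemma hm_neg (w₁ w₂ : ℕ) (P : P2) : hm w₁ w₂ (-P) = - hm w₁ w₂ P := by
  have h := hm_add w₁ w₂ P (-P)
  rw [add_neg_cancel, hm_zero] at h
  linear_combination -h

lemma hm_sub (w₁ w₂ : ℕ) (P Q : P2) : hm w₁ w₂ (P - Q) = hm w₁ w₂ P - hm w₁ w₂ Q := by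
  rw [sub_eq_add_neg, hm_add, hm_neg, sub_eq_add_neg]

lemma hm_sum (w₁ w₂ : ℕ) {α : Type*} (s : Finset α) (f : α → P2) :
    hm w₁ w₂ (∑ a ∈ s, f a) = ∑ a ∈ s, hm w₁ w₂ (f a) := by
  classical
  induction s using Finset.induction_on with
  | empty => simp [hm_zero]
  | insert _ _ h ih => rw [Finset.sum_insert h, Finset.sum_insert h, hm_add, ih]

lemma hm_monomial (w₁ w₂ : ℕ) (d : Fin 2 →₀ ℕ) (c : ℚ) :
    hm w₁ w₂ (monomial d c)
      = C c * (X 0 ^ d 0 * X 1 ^ (w₁ - d 0) * X 2 ^ d 1 * X 3 ^ (w₂ - d 1)) := by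
  unfold hm
  rw [← single_eq_monomial, AddMonoidAlgebra.coeff_single, Finsupp.sum_single_index (by simp)]

lemma mon2 (e : Fin 2 →₀ ℕ) (c : ℚ) :
    (monomial e c : P2) = C c * X 0 ^ e 0 * X 1 ^ e 1 := by
  rw [monomial_eq, Finsupp.prod_pow, Fin.prod_univ_two, mul_assoc]

lemma mon4 (e : Fin 4 →₀ ℕ) (c : ℚ) :
    (monomial e c : P4) = C c * X 0 ^ e 0 * X 1 ^ e 1 * X 2 ^ e 2 * X 3 ^ e 3 := by
  rw [monomial_eq, Finsupp.prod_pow, Fin.prod_univ_four]; ring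

lemma pr_hm (w₁ w₂ : ℕ) (P : P2) : pr (hm w₁ w₂ P) = P := by
  conv_rhs => rw [as_sum P]
  unfold hm
  rw [Finsupp.sum, map_sum]
  refine Finset.sum_congr rfl fun e he => ?_
  rw [mon2]
  simp only [pr, map_mul, map_pow, aeval_X, aeval_C]
  simp [Matrix.cons_val_zero, Matrix.cons_val_one]
  rw [mul_assoc]; rfl



def sg (A B : Matrix (Fin 2) (Fin 2) ℤ) : P4 →ₐ[ℚ] P4 :=
  aeval ![C ((A 0 0 : ℤ) : ℚ) * X 0 + C ((A 0 1 : ℤ) : ℚ) * X 1,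
          C ((A 1 0 : ℤ) : ℚ) * X 0 + C ((A 1 1 : ℤ) : ℚ) * X 1,
          C ((B 0 0 : ℤ) : ℚ) * X 2 + C ((B 0 1 : ℤ) : ℚ) * X 3,
          C ((B 1 0 : ℤ) : ℚ) * X 2 + C ((B 1 1 : ℤ) : ℚ) * X 3]

lemma hm_def (w₁ w₂ : ℕ) (P : P2) : hm w₁ w₂ P
    = ∑ e ∈ P.support, C (coeff e P) * (X 0 ^ e 0 * X 1 ^ (w₁ - e 0) * X 2 ^ e 1 * X 3 ^ (w₂ - e 1)) := rfl

lemma slash2_eq (w₁ w₂ : ℕ) (A B : Matrix (Fin 2) (Fin 2) ℤ) (P : P2) :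
    slash2 w₁ w₂ A B P = pr (sg A B (hm w₁ w₂ P)) := by
  rw [hm_def, map_sum, map_sum, slash2]
  refine Finset.sum_congr rfl fun e he => ?_
  simp only [sg, pr, map_mul, map_pow, map_add, aeval_X, aeval_C,
    Matrix.cons_val_zero, Matrix.cons_val_one, Matrix.head_cons, Matrix.cons_val_two,
    Matrix.cons_val_three, Matrix.tail_cons, map_intCast, MvPolynomial.algebraMap_eq]
  push_cast
  ring

def IsBi (w₁ w₂ : ℕ) (R : P4) : Prop := ∀ e ∈ R.support, e 0 + e 1 = w₁ ∧ e 2 + e 3 = w₂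

lemma isBi_congr {w₁ w₂ u₁ u₂ : ℕ} {R : P4} (h : IsBi w₁ w₂ R) (h1 : w₁ = u₁) (h2 : w₂ = u₂) :
    IsBi u₁ u₂ R := h1 ▸ h2 ▸ h

lemma isBi_zero (w₁ w₂ : ℕ) : IsBi w₁ w₂ 0 := by intro e he; simp at he

lemma isBi_monomial (e : Fin 4 →₀ ℕ) (c : ℚ) : IsBi (e 0 + e 1) (e 2 + e 3) (monomial e c : P4) := by
  intro f hf
  classical
  have h2 := support_monomial (s := e) (a := c) ▸ hf
  rcases eq_or_ne c 0 with rfl | hc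
  · simp at h2
  · simp [hc] at h2; simp [h2]

lemma isBi_C (c : ℚ) : IsBi 0 0 (C c : P4) := by
  intro e he
  rw [C_apply] at he
  simpa using isBi_monomial 0 c e he

lemma isBi_add {w₁ w₂ : ℕ} {R R' : P4} (hR : IsBi w₁ w₂ R) (hR' : IsBi w₁ w₂ R') :
    IsBi w₁ w₂ (R + R') := by
  intro e he
  classical
  rcases Finset.mem_union.1 (support_add he) with h | h
  · exact hR _ h
  · exact hR' _ h

lemma isBi_sum {w₁ w₂ : ℕ} {α : Type*} {s : Finset α} {f : α → P4}
    (h : ∀ a ∈ s, IsBi w₁ w₂ (f a)) : IsBi w₁ w₂ (∑ a ∈ s, f a) := by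
  classical
  induction s using Finset.induction_on with
  | empty => simpa using isBi_zero w₁ w₂
  | @insert a s ha ih =>
      rw [Finset.sum_insert ha]
      exact isBi_add (h a (Finset.mem_insert_self a s))
        (ih fun b hb => h b (Finset.mem_insert_of_mem hb))

lemma isBi_mul {w₁ w₂ v₁ v₂ : ℕ} {R R' : P4} (h : IsBi w₁ w₂ R) (h' : IsBi v₁ v₂ R') :
    IsBi (w₁ + v₁) (w₂ + v₂) (R * R') := by
  intro e he
  classical
  obtain ⟨b, hb, c, hc, rfl⟩ := Finset.mem_add.1 (support_mul R R' he)
  obtain ⟨hb1, hb2⟩ := h b hb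
  obtain ⟨hc1, hc2⟩ := h' c hc
  constructor <;> simp [Finsupp.add_apply] <;> omega

lemma isBi_pow {w₁ w₂ : ℕ} {R : P4} (h : IsBi w₁ w₂ R) (n : ℕ) :
    IsBi (n * w₁) (n * w₂) (R ^ n) := by
  induction n with
  | zero => simpa using isBi_congr (isBi_C 1) (by simp) (by simp)
  | succ n ih =>
      rw [pow_succ]
      exact isBi_congr (isBi_mul ih h) (by ring) (by ring)


lemma equivFun_apply {n : ℕ} (f : Fin n → ℕ) (i : Fin n) :
    (Finsupp.equivFunOnFinite.symm f) i = f i := by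
  simp

lemma isBi_term (e0 e1 e2 e3 : ℕ) (c : ℚ) :
    IsBi (e0 + e1) (e2 + e3) (C c * X 0 ^ e0 * X 1 ^ e1 * X 2 ^ e2 * X 3 ^ e3 : P4) := by
  have hmon : (C c * X 0 ^ e0 * X 1 ^ e1 * X 2 ^ e2 * X 3 ^ e3 : P4)
      = monomial (Finsupp.equivFunOnFinite.symm ![e0, e1, e2, e3]) c := by
    rw [mon4] <;> simp [equivFun_apply]
  rw [hmon]
  exact isBi_congr (isBi_monomial _ c) (by simp [equivFun_apply]) (by simp [equivFun_apply])

lemma isBi_hm {w₁ w₂ : ℕ} {P : P2} (h0 : degreeOf 0 P ≤ w₁) (h1 : degreeOf 1 P ≤ w₂) :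
    IsBi w₁ w₂ (hm w₁ w₂ P) := by
  rw [hm_def]
  refine isBi_sum fun e he => ?_
  have he0 : e 0 ≤ w₁ := degreeOf_le_iff.1 h0 e he
  have he1 : e 1 ≤ w₂ := degreeOf_le_iff.1 h1 e he
  have h2 : (C (coeff e P) * (X 0 ^ e 0 * X 1 ^ (w₁ - e 0) * X 2 ^ e 1 * X 3 ^ (w₂ - e 1)) : P4)
      = C (coeff e P) * X 0 ^ e 0 * X 1 ^ (w₁ - e 0) * X 2 ^ e 1 * X 3 ^ (w₂ - e 1) := by ring
  rw [h2]
  exact isBi_congr (isBi_term (e 0) (w₁ - e 0) (e 1) (w₂ - e 1) (coeff e P)) (by omega) (by omega)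

lemma pr_monomial (e : Fin 4 →₀ ℕ) (c : ℚ) :
    pr (monomial e c) = monomial (Finsupp.equivFunOnFinite.symm ![e 0, e 2]) c := by
  rw [mon4, mon2]
  simp only [pr, map_mul, map_pow, aeval_X, aeval_C, Matrix.cons_val_zero, Matrix.cons_val_one,
    Matrix.head_cons, Matrix.cons_val_two, Matrix.cons_val_three, Matrix.tail_cons]
  simp [equivFun_apply]

lemma hm_pr_of_isBi {w₁ w₂ : ℕ} {R : P4} (h : IsBi w₁ w₂ R) : hm w₁ w₂ (pr R) = R := by
  have hpr : pr R = ∑ e ∈ R.support, pr (monomial e (coeff e R)) := by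
    rw [← map_sum]; exact congrArg pr (as_sum R)
  rw [hpr, hm_sum]
  conv_rhs => rw [as_sum R]
  refine Finset.sum_congr rfl fun e he => ?_
  obtain ⟨h1, h2⟩ := h e he
  rw [pr_monomial, hm_monomial]
  simp only [equivFun_apply, Matrix.cons_val_zero, Matrix.cons_val_one, Matrix.head_cons]
  rw [mon4 e]
  rw [show w₁ - e 0 = e 1 by omega, show w₂ - e 2 = e 3 by omega]
  ring

lemma isBi_lin0 (a b : ℚ) : IsBi 1 0 (C a * X 0 + C b * X 1 : P4) := by
  have h1 := isBi_term 1 0 0 0 a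
  have h2 := isBi_term 0 1 0 0 b
  simp only [pow_one, pow_zero, mul_one] at h1 h2
  exact isBi_add (isBi_congr h1 rfl rfl) (isBi_congr h2 rfl rfl)

lemma isBi_lin1 (a b : ℚ) : IsBi 0 1 (C a * X 2 + C b * X 3 : P4) := by
  have h1 := isBi_term 0 0 1 0 a
  have h2 := isBi_term 0 0 0 1 b
  simp only [pow_one, pow_zero, mul_one] at h1 h2
  exact isBi_add (isBi_congr h1 rfl rfl) (isBi_congr h2 rfl rfl)

lemma isBi_sg {w₁ w₂ : ℕ} (A B : Matrix (Fin 2) (Fin 2) ℤ) {R : P4} (h : IsBi w₁ w₂ R) :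
    IsBi w₁ w₂ (sg A B R) := by
  conv_rhs => rw [as_sum R]
  rw [map_sum]
  refine isBi_sum fun e he => ?_
  obtain ⟨h1, h2⟩ := h e he
  rw [mon4, map_mul, map_mul, map_mul, map_mul, map_pow, map_pow, map_pow, map_pow]
  simp only [sg, aeval_X, aeval_C, Matrix.cons_val_zero, Matrix.cons_val_one, Matrix.head_cons,
    Matrix.cons_val_two, Matrix.cons_val_three, Matrix.tail_cons, MvPolynomial.algebraMap_eq]
  have hc : IsBi 0 0 (aeval (R := ℚ) ![C ((A 0 0 : ℤ) : ℚ) * X 0 + C ((A 0 1 : ℤ) : ℚ) * X 1,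
      C ((A 1 0 : ℤ) : ℚ) * X 0 + C ((A 1 1 : ℤ) : ℚ) * X 1,
      C ((B 0 0 : ℤ) : ℚ) * X 2 + C ((B 0 1 : ℤ) : ℚ) * X 3,
      C ((B 1 0 : ℤ) : ℚ) * X 2 + C ((B 1 1 : ℤ) : ℚ) * X 3] (C (coeff e R))) = IsBi 0 0 (C (coeff e R) : P4) := by
    rw [aeval_C, MvPolynomial.algebraMap_eq]
  refine isBi_congr (isBi_mul (isBi_mul (isBi_mul (isBi_mul (isBi_C _)
    (isBi_pow (isBi_lin0 _ _) (e 0))) (isBi_pow (isBi_lin0 _ _) (e 1)))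
    (isBi_pow (isBi_lin1 _ _) (e 2))) (isBi_pow (isBi_lin1 _ _) (e 3))) (by omega) (by omega)

lemma degreeOf_pr {w₁ w₂ : ℕ} {R : P4} (h : IsBi w₁ w₂ R) :
    degreeOf 0 (pr R) ≤ w₁ ∧ degreeOf 1 (pr R) ≤ w₂ := by
  classical
  constructor <;> rw [degreeOf_le_iff] <;> intro d hd <;>
  · have hpr : pr R = ∑ e ∈ R.support, pr (monomial e (coeff e R)) := by
      rw [← map_sum]; exact congrArg pr (as_sum R)
    rw [hpr] at hd
    obtain ⟨e, he, hde⟩ := Finset.mem_biUnion.1 (support_sum hd)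
    rw [pr_monomial] at hde
    obtain ⟨h1, h2⟩ := h e he
    have hd2 := support_monomial (s := Finsupp.equivFunOnFinite.symm ![e 0, e 2])
        (a := coeff e R) ▸ hde
    rcases eq_or_ne (coeff e R) 0 with hc | hc
    · simp [hc] at hd2
    · simp only [hc, if_neg, if_false, Finset.mem_singleton] at hd2
      subst hd2
      simp [equivFun_apply]
      omega

lemma sg_blockfree {R : P4} (A B B' : Matrix (Fin 2) (Fin 2) ℤ)
    (h : ∀ e ∈ R.support, e 2 = 0 ∧ e 3 = 0) : sg A B R = sg A B' R := by
  have hs : ∀ (B0 : Matrix (Fin 2) (Fin 2) ℤ), sg A B0 R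
      = ∑ e ∈ R.support, sg A B0 (monomial e (coeff e R)) := fun B0 => by
    rw [← map_sum]; exact congrArg _ (as_sum R)
  rw [hs B, hs B']
  refine Finset.sum_congr rfl fun e he => ?_
  obtain ⟨h2, h3⟩ := h e he
  rw [mon4, h2, h3, pow_zero, pow_zero, mul_one, mul_one]
  simp only [map_mul, map_pow, sg, aeval_X, aeval_C, Matrix.cons_val_zero, Matrix.cons_val_one,
    Matrix.head_cons]

def dg4 : P4 →ₐ[ℚ] P4 := aeval ![X 0, X 1, X 0, X 1]

lemma dg4_sg_comm (A : Matrix (Fin 2) (Fin 2) ℤ) (R : P4) :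
    dg4 (sg A A R) = sg A A (dg4 R) := by
  have : dg4.comp (sg A A) = (sg A A).comp dg4 := by
    refine algHom_ext fun i => ?_
    fin_cases i <;>
      simp [dg4, sg, Matrix.cons_val_zero, Matrix.cons_val_one, Matrix.head_cons]
  exact congrFun (congrArg DFunLike.coe this) R

lemma isBi_X0 : IsBi 1 0 (X 0 : P4) := by
  have := isBi_term 1 0 0 0 (1 : ℚ)
  simpa using this

lemma isBi_X1 : IsBi 1 0 (X 1 : P4) := by
  have := isBi_term 0 1 0 0 (1 : ℚ)
  simpa using this

lemma isBi_dg4 {w₁ w₂ : ℕ} {R : P4} (h : IsBi w₁ w₂ R) : IsBi (w₁ + w₂) 0 (dg4 R) := by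
  have hs : dg4 R = ∑ e ∈ R.support, dg4 (monomial e (coeff e R)) := by
    rw [← map_sum]; exact congrArg _ (as_sum R)
  rw [hs]
  refine isBi_sum fun e he => ?_
  obtain ⟨h1, h2⟩ := h e he
  rw [mon4]
  simp only [map_mul, map_pow, dg4, aeval_X, aeval_C, Matrix.cons_val_zero, Matrix.cons_val_one,
    Matrix.head_cons, MvPolynomial.algebraMap_eq]
  refine isBi_congr (isBi_mul (isBi_mul (isBi_mul (isBi_mul (isBi_C _)
    (isBi_pow isBi_X0 (e 0))) (isBi_pow isBi_X1 (e 1)))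
    (isBi_pow isBi_X0 (e 2))) (isBi_pow isBi_X1 (e 3))) (by omega) (by omega)

lemma diag_pr (R : P4) : diagRes (pr R) = pr (dg4 R) := by
  have : (rename (fun _ => (0 : Fin 2)) : P2 →ₐ[ℚ] P2).comp pr = pr.comp dg4 := by
    refine algHom_ext fun i => ?_
    fin_cases i <;>
      simp [dg4, pr, Matrix.cons_val_zero, Matrix.cons_val_one, Matrix.head_cons, rename_X]
  exact congrFun (congrArg DFunLike.coe this) R

lemma sg_D (A : Matrix (Fin 2) (Fin 2) ℤ) :
    sg A A (X 0 * X 3 - X 1 * X 2) =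
      C ((A 0 0 * A 1 1 - A 0 1 * A 1 0 : ℤ) : ℚ) * (X 0 * X 3 - X 1 * X 2) := by
  simp only [map_sub, map_mul, sg, aeval_X, Matrix.cons_val_zero, Matrix.cons_val_one,
    Matrix.head_cons, Matrix.cons_val_two, Matrix.cons_val_three, Matrix.tail_cons]
  push_cast
  simp only [map_sub, map_mul]
  ring

lemma hm11 : hm 1 1 (X 0 - X 1 : P2) = X 0 * X 3 - X 1 * X 2 := by
  have hx0 : (X 0 : P2) = monomial (Finsupp.single 0 1) 1 := by
    rw [← pow_one (X 0 : P2), X_pow_eq_monomial]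
  have hx1 : (X 1 : P2) = monomial (Finsupp.single 1 1) 1 := by
    rw [← pow_one (X 1 : P2), X_pow_eq_monomial]
  rw [hm_sub, hx0, hx1, hm_monomial, hm_monomial]
  simp [Finsupp.single_apply]

lemma pr_D : pr (X 0 * X 3 - X 1 * X 2) = (X 0 - X 1 : P2) := by
  simp only [map_sub, map_mul, pr, aeval_X, Matrix.cons_val_zero, Matrix.cons_val_one,
    Matrix.head_cons, Matrix.cons_val_two, Matrix.cons_val_three, Matrix.tail_cons]
  ring

lemma isBi_D : IsBi 1 1 (X 0 * X 3 - X 1 * X 2 : P4) := by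
  have h1 := isBi_term 1 0 0 1 (1 : ℚ)
  have h2 := isBi_term 0 1 1 0 (-1 : ℚ)
  simp only [pow_one, pow_zero, mul_one, one_mul, map_one] at h1 h2
  have : (X 0 * X 3 - X 1 * X 2 : P4) = C (1:ℚ) * X 0 * X 3 + C (-1:ℚ) * X 1 * X 2 := by
    simp only [map_one, map_neg]; ring
  rw [this]
  exact isBi_add (by simpa [mul_assoc] using h1) (by simpa [mul_assoc] using h2)

lemma degD (i : Fin 2) : degreeOf i (X 0 - X 1 : P2) ≤ 1 := by
  classical
  rw [degreeOf_le_iff]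
  intro d hd
  have h1 : (X 0 - X 1 : P2) = X 0 + (- X 1) := by ring
  rw [h1] at hd
  rcases Finset.mem_union.1 (support_add hd) with h | h
  · rw [support_X] at h
    simp only [Finset.mem_singleton] at h
    subst h
    rw [Finsupp.single_apply]
    split_ifs <;> norm_num
  · rw [support_neg, support_X] at h
    simp only [Finset.mem_singleton] at h
    subst h
    rw [Finsupp.single_apply]
    split_ifs <;> norm_num

lemma hm_eq_of {w₁ w₂ : ℕ} {R : P4} {Q : P2} (h : IsBi w₁ w₂ R) (hpr : pr R = Q) :
    hm w₁ w₂ Q = R := by rw [← hpr, hm_pr_of_isBi h]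

lemma hm_mulD {v₁ v₂ : ℕ} {P : P2} (h0 : degreeOf 0 P ≤ v₁) (h1 : degreeOf 1 P ≤ v₂) :
    hm (v₁+1) (v₂+1) ((X 0 - X 1) * P) = (X 0 * X 3 - X 1 * X 2) * hm v₁ v₂ P := by
  refine hm_eq_of ?_ ?_
  · exact isBi_congr (isBi_mul isBi_D (isBi_hm h0 h1)) (by ring) (by ring)
  · rw [map_mul, pr_D, pr_hm]

lemma pr_C (c : ℚ) : pr (C c) = C c := by
  simp [pr, MvPolynomial.algebraMap_eq]

lemma slash_mulD (A : Matrix (Fin 2) (Fin 2) ℤ) {v₁ v₂ : ℕ} {P : P2}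
    (h0 : degreeOf 0 P ≤ v₁) (h1 : degreeOf 1 P ≤ v₂)
    (hdet : A 0 0 * A 1 1 - A 0 1 * A 1 0 = 1) :
    slash2 (v₁+1) (v₂+1) A A ((X 0 - X 1) * P) = (X 0 - X 1) * slash2 v₁ v₂ A A P := by
  rw [slash2_eq, slash2_eq, hm_mulD h0 h1, map_mul, sg_D, hdet, map_mul, map_mul, pr_D, pr_C]
  norm_num

lemma slash_diag (A : Matrix (Fin 2) (Fin 2) ℤ) {w₁ w₂ : ℕ} {Q : P2}
    (h0 : degreeOf 0 Q ≤ w₁) (h1 : degreeOf 1 Q ≤ w₂) :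
    diagRes (slash2 w₁ w₂ A A Q) = slashVar 0 (w₁ + w₂) A (diagRes Q) := by
  have hbi : IsBi w₁ w₂ (hm w₁ w₂ Q) := isBi_hm h0 h1
  have hdg : IsBi (w₁ + w₂) 0 (dg4 (hm w₁ w₂ Q)) := isBi_dg4 hbi
  have hdiag : diagRes Q = pr (dg4 (hm w₁ w₂ Q)) := by
    rw [← diag_pr, pr_hm]
  have hhm : hm (w₁ + w₂) 0 (diagRes Q) = dg4 (hm w₁ w₂ Q) := hm_eq_of hdg hdiag.symm
  have h2 : slashVar 0 (w₁ + w₂) A (diagRes Q) = pr (sg A 1 (dg4 (hm w₁ w₂ Q))) := by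
    rw [slashVar, if_pos rfl, slash2_eq, hhm]
  rw [h2, sg_blockfree A 1 A (fun e he => by obtain ⟨_, hz⟩ := hdg e he; omega)]
  rw [← dg4_sg_comm, ← diag_pr, ← slash2_eq]

lemma deg_diagRes {w₁ w₂ : ℕ} {Q : P2} (h0 : degreeOf 0 Q ≤ w₁) (h1 : degreeOf 1 Q ≤ w₂) :
    degreeOf 0 (diagRes Q) ≤ w₁ + w₂ ∧ degreeOf 1 (diagRes Q) = 0 := by
  have hdg : IsBi (w₁ + w₂) 0 (dg4 (hm w₁ w₂ Q)) := isBi_dg4 (isBi_hm h0 h1)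
  have hdiag : diagRes Q = pr (dg4 (hm w₁ w₂ Q)) := by rw [← diag_pr, pr_hm]
  rw [hdiag]
  exact ⟨(degreeOf_pr hdg).1, Nat.le_zero.1 (degreeOf_pr hdg).2⟩

lemma diagRes_add (P Q : P2) : diagRes (P + Q) = diagRes P + diagRes Q := map_add _ _ _

lemma detS : Smat 0 0 * Smat 1 1 - Smat 0 1 * Smat 1 0 = 1 := by decide
lemma detU : Umat 0 0 * Umat 1 1 - Umat 0 1 * Umat 1 0 = 1 := by decide
lemma detU2 : (Umat * Umat) 0 0 * (Umat * Umat) 1 1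
    - (Umat * Umat) 0 1 * (Umat * Umat) 1 0 = 1 := by decide

lemma diagRes_zero : diagRes 0 = 0 := by simp [diagRes]

lemma Dne : (X 0 - X 1 : P2) ≠ 0 := by
  intro h
  have h1 : coeff (Finsupp.single 0 1) (X 0 - X 1 : P2) = 1 := by
    rw [coeff_sub, coeff_X_same, coeff_X']
    rw [if_neg (by
      intro hc
      have := DFunLike.congr_fun hc (0 : Fin 2)
      simp [Finsupp.single_apply] at this)]
    ring
  rw [h] at h1
  simp at h1

lemma part1 {k₁ k₂ : ℕ} (hk₁ : 4 ≤ k₁) (hk₂ : 4 ≤ k₂) (P : P2)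
    (hP : memVID (k₁ - 1) (k₂ - 1) P) : memVID k₁ k₂ ((X 0 - X 1) * P) := by
  obtain ⟨⟨hd0, hd1⟩, hS, hU⟩ := hP
  have e1 : k₁ - 2 = (k₁ - 1 - 2) + 1 := by omega
  have e2 : k₂ - 2 = (k₂ - 1 - 2) + 1 := by omega
  refine ⟨⟨?_, ?_⟩, ?_, ?_⟩
  · calc degreeOf 0 ((X 0 - X 1) * P) ≤ degreeOf 0 (X 0 - X 1) + degreeOf 0 P :=
        degreeOf_mul_le _ _ _
      _ ≤ 1 + (k₁ - 1 - 2) := add_le_add (degD 0) hd0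
      _ ≤ k₁ - 2 := by omega
  · calc degreeOf 1 ((X 0 - X 1) * P) ≤ degreeOf 1 (X 0 - X 1) + degreeOf 1 P :=
        degreeOf_mul_le _ _ _
      _ ≤ 1 + (k₂ - 1 - 2) := add_le_add (degD 1) hd1
      _ ≤ k₂ - 2 := by omega
  · rw [e1, e2, slash_mulD Smat hd0 hd1 detS, ← mul_add, hS, mul_zero]
  · rw [e1, e2, slash_mulD Umat hd0 hd1 detU, slash_mulD (Umat * Umat) hd0 hd1 detU2,
      ← mul_add, ← mul_add, hU, mul_zero]

lemma part2 (P Q : P2) (h : (X 0 - X 1) * P = (X 0 - X 1) * Q) : P = Q :=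
  mul_left_cancel₀ Dne h

lemma part3 {k₁ k₂ : ℕ} (hk₁ : 4 ≤ k₁) (hk₂ : 4 ≤ k₂) (Q : P2)
    (hQ : memVID k₁ k₂ Q) : memW1 0 (k₁ + k₂ - 2) (diagRes Q) := by
  obtain ⟨⟨h0, h1⟩, hS, hU⟩ := hQ
  have em : k₁ + k₂ - 2 - 2 = (k₁ - 2) + (k₂ - 2) := by omega
  obtain ⟨hdeg, hz⟩ := deg_diagRes h0 h1
  refine ⟨?_, ?_, ?_, ?_⟩
  · intro i hi
    have hi1 : i = 1 := by omega
    rw [hi1]; exact hz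
  · rw [em]; exact hdeg
  · rw [em, ← slash_diag Smat h0 h1, ← diagRes_add, hS, diagRes_zero]
  · rw [em, ← slash_diag Umat h0 h1, ← slash_diag (Umat * Umat) h0 h1, ← diagRes_add,
      ← diagRes_add, hU, diagRes_zero]

def ev1 : P2 →ₐ[ℚ] MvPolynomial (Fin 1) ℚ := aeval (fun _ => X 0)

lemma X1_succ : (X 1 : P2) = X (Fin.succ 0) := rfl

lemma finSucc_X1 : MvPolynomial.finSuccEquiv ℚ 1 (X 1) = Polynomial.C (X 0) := by
  rw [X1_succ, finSuccEquiv_X_succ]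

lemma ev1_eval (Q : P2) :
    Polynomial.eval (X 0 : MvPolynomial (Fin 1) ℚ) (MvPolynomial.finSuccEquiv ℚ 1 Q) = ev1 Q := by
  induction Q using MvPolynomial.induction_on with
  | C a => simp [ev1, MvPolynomial.algebraMap_eq, finSuccEquiv_apply]
  | add p q hp hq => rw [map_add, Polynomial.eval_add, hp, hq, map_add]
  | mul_X p i hp =>
      rw [map_mul, Polynomial.eval_mul, hp, map_mul]
      congr 1
      fin_cases i
      · rw [show X (⟨0, by omega⟩ : Fin 2) = (X 0 : P2) from rfl, finSuccEquiv_X_zero]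
        simp [ev1]
      · rw [show X (⟨1, by omega⟩ : Fin 2) = (X 1 : P2) from rfl, finSucc_X1]
        simp [ev1]

lemma diag_eq_zero_iff (Q : P2) : diagRes Q = 0 ↔ ev1 Q = 0 := by
  have hcomp : ((rename (fun _ : Fin 1 => (0 : Fin 2)) : MvPolynomial (Fin 1) ℚ →ₐ[ℚ] P2).comp ev1)
      = (rename (fun _ : Fin 2 => (0 : Fin 2)) : P2 →ₐ[ℚ] P2) := by
    refine algHom_ext fun i => ?_
    simp [ev1, rename_X]
  have h : diagRes Q = rename (fun _ : Fin 1 => (0 : Fin 2)) (ev1 Q) := by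
    rw [diagRes]
    exact (congrFun (congrArg DFunLike.coe hcomp) Q).symm
  constructor
  · intro h0
    rw [h] at h0
    have hinj : Function.Injective (fun _ : Fin 1 => (0 : Fin 2)) :=
      fun a b _ => Subsingleton.elim a b
    have := rename_injective (R := ℚ) _ hinj
    exact this (by simpa using h0)
  · intro h0; rw [h, h0, map_zero]

lemma finSucc_D : MvPolynomial.finSuccEquiv ℚ 1 (X 0 - X 1 : P2)
    = Polynomial.X - Polynomial.C (X 0) := by
  rw [map_sub, finSuccEquiv_X_zero, finSucc_X1]

lemma degOf_neg_le {P : P2} {i : Fin 2} {d : ℕ} :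
    degreeOf i (-P) ≤ d ↔ degreeOf i P ≤ d := by
  rw [degreeOf_le_iff, degreeOf_le_iff, support_neg]

lemma degQuot0 {Q P : P2} {w : ℕ} (h : Q = (X 0 - X 1) * P) (hQ : degreeOf 0 Q ≤ w)
    (hw : 1 ≤ w) : degreeOf 0 P ≤ w - 1 := by
  rcases eq_or_ne P 0 with rfl | hP
  · simp
  have hmul : MvPolynomial.finSuccEquiv ℚ 1 Q
      = (Polynomial.X - Polynomial.C (X 0)) * MvPolynomial.finSuccEquiv ℚ 1 P := by
    rw [h, map_mul, finSucc_D]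
  have hP' : MvPolynomial.finSuccEquiv ℚ 1 P ≠ 0 := fun hc =>
    hP ((map_eq_zero_iff _ (AlgEquiv.injective _)).1 hc)
  have hdeg : (MvPolynomial.finSuccEquiv ℚ 1 Q).natDegree
      = 1 + (MvPolynomial.finSuccEquiv ℚ 1 P).natDegree := by
    rw [hmul, Polynomial.natDegree_mul (Polynomial.X_sub_C_ne_zero _) hP',
      Polynomial.natDegree_X_sub_C]
  rw [natDegree_finSuccEquiv, natDegree_finSuccEquiv] at hdeg
  omega

lemma degQuot1 {Q P : P2} {w : ℕ} (h : Q = (X 0 - X 1) * P) (hQ : degreeOf 1 Q ≤ w)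
    (hw : 1 ≤ w) : degreeOf 1 P ≤ w - 1 := by
  have hsw : Function.Injective (Equiv.swap (0 : Fin 2) 1) := (Equiv.swap _ _).injective
  have h1 : rename (⇑(Equiv.swap (0 : Fin 2) 1)) Q
      = (X 0 - X 1) * (- rename (⇑(Equiv.swap (0 : Fin 2) 1)) P) := by
    rw [h, map_mul, map_sub, rename_X, rename_X, Equiv.swap_apply_left, Equiv.swap_apply_right]
    ring
  have hq : degreeOf 0 (rename (⇑(Equiv.swap (0 : Fin 2) 1)) Q) ≤ w := by
    have := degreeOf_rename_of_injective (p := Q) hsw 1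
    rw [Equiv.swap_apply_right] at this
    rw [this]; exact hQ
  have h2 := degQuot0 h1 hq hw
  rw [degOf_neg_le] at h2
  have := degreeOf_rename_of_injective (p := P) hsw 1
  rw [Equiv.swap_apply_right] at this
  rw [← this]; exact h2

lemma part4 {k₁ k₂ : ℕ} (hk₁ : 4 ≤ k₁) (hk₂ : 4 ≤ k₂) (Q : P2) (hQ : memVID k₁ k₂ Q) :
    (diagRes Q = 0 ↔ ∃ P : P2, memVID (k₁ - 1) (k₂ - 1) P ∧ Q = (X 0 - X 1) * P) := by
  obtain ⟨⟨h0, h1⟩, hS, hU⟩ := hQ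
  constructor
  · intro hdz
    have hv : ev1 Q = 0 := (diag_eq_zero_iff Q).1 hdz
    have hroot : (MvPolynomial.finSuccEquiv ℚ 1 Q).IsRoot (X 0) := by
      rw [Polynomial.IsRoot, ev1_eval]; exact hv
    obtain ⟨q', hq'⟩ := Polynomial.dvd_iff_isRoot.2 hroot
    set P := (MvPolynomial.finSuccEquiv ℚ 1).symm q' with hP
    have hfac : Q = (X 0 - X 1) * P := by
      apply (MvPolynomial.finSuccEquiv ℚ 1).injective
      rw [map_mul, finSucc_D, hq', hP, AlgEquiv.apply_symm_apply]
    have hd0 : degreeOf 0 P ≤ k₁ - 1 - 2 := by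
      have := degQuot0 hfac h0 (by omega)
      omega
    have hd1 : degreeOf 1 P ≤ k₂ - 1 - 2 := by
      have := degQuot1 hfac h1 (by omega)
      omega
    have e1 : k₁ - 2 = (k₁ - 1 - 2) + 1 := by omega
    have e2 : k₂ - 2 = (k₂ - 1 - 2) + 1 := by omega
    refine ⟨P, ⟨⟨hd0, hd1⟩, ?_, ?_⟩, hfac⟩
    · have hrel := hS
      rw [hfac, e1, e2, slash_mulD Smat hd0 hd1 detS, ← mul_add] at hrel
      exact (mul_eq_zero.1 hrel).resolve_left Dne
    · have hrel := hU
      rw [hfac, e1, e2, slash_mulD Umat hd0 hd1 detU,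
        slash_mulD (Umat * Umat) hd0 hd1 detU2, ← mul_add, ← mul_add] at hrel
      exact (mul_eq_zero.1 hrel).resolve_left Dne
  · rintro ⟨P, _, rfl⟩
    rw [diagRes, map_mul, map_sub, rename_X, rename_X, sub_self, zero_mul]

def ι46 : Fin 4 → Fin 6 := Fin.castLE (by omega)

lemma ι46_inj : Function.Injective ι46 := Fin.castLE_injective _

def inc : P4 →ₐ[ℚ] P6 := rename ι46

def sg6 (A : Matrix (Fin 2) (Fin 2) ℤ) : P6 →ₐ[ℚ] P6 :=
  aeval ![C ((A 0 0 : ℤ) : ℚ) * X 0 + C ((A 0 1 : ℤ) : ℚ) * X 1,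
          C ((A 1 0 : ℤ) : ℚ) * X 0 + C ((A 1 1 : ℤ) : ℚ) * X 1,
          C ((A 0 0 : ℤ) : ℚ) * X 2 + C ((A 0 1 : ℤ) : ℚ) * X 3,
          C ((A 1 0 : ℤ) : ℚ) * X 2 + C ((A 1 1 : ℤ) : ℚ) * X 3, X 4, X 5]

def tau : P4 →ₐ[ℚ] P6 := aeval ![X 4 * X 0 + X 5 * X 2, X 4 * X 1 + X 5 * X 3, X 2, X 3]

def dg6 : P6 →ₐ[ℚ] P6 := aeval ![X 0, X 1, X 0, X 1, X 4, X 5]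

def res64 (e : Fin 6 →₀ ℕ) : Fin 4 →₀ ℕ :=
  Finsupp.equivFunOnFinite.symm (fun i => e (ι46 i))

lemma res64_apply (e : Fin 6 →₀ ℕ) (i : Fin 4) : res64 e i = e (ι46 i) := by simp [res64]

def Ext (a b : ℕ) (R : P6) : P4 :=
  (AddMonoidAlgebra.coeff R).sum fun e c => if e 4 = a ∧ e 5 = b then monomial (res64 e) c else 0

lemma Ext_add (a b : ℕ) (R R' : P6) : Ext a b (R + R') = Ext a b R + Ext a b R' := by
  unfold Ext
  refine Finsupp.sum_add_index' (fun e => by split_ifs <;> simp) fun e c₁ c₂ => ?_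
  split_ifs <;> simp

lemma Ext_zero (a b : ℕ) : Ext a b 0 = 0 := by simp [Ext]

lemma Ext_sum (a b : ℕ) {α : Type*} (s : Finset α) (f : α → P6) :
    Ext a b (∑ x ∈ s, f x) = ∑ x ∈ s, Ext a b (f x) := by
  classical
  induction s using Finset.induction_on with
  | empty => simp [Ext_zero]
  | insert _ _ h ih => rw [Finset.sum_insert h, Finset.sum_insert h, Ext_add, ih]

lemma Ext_monomial (a b : ℕ) (e : Fin 6 →₀ ℕ) (c : ℚ) :
    Ext a b (monomial e c) = if e 4 = a ∧ e 5 = b then monomial (res64 e) c else 0 := by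
  unfold Ext
  rw [← single_eq_monomial, AddMonoidAlgebra.coeff_single, Finsupp.sum_single_index (by split_ifs <;> simp)]

lemma not_mem_range4 : (4 : Fin 6) ∉ Set.range ι46 := by
  rintro ⟨i, hi⟩
  have := congrArg Fin.val hi
  simp [ι46, Fin.castLE] at this
  omega

lemma not_mem_range5 : (5 : Fin 6) ∉ Set.range ι46 := by
  rintro ⟨i, hi⟩
  have := congrArg Fin.val hi
  simp [ι46, Fin.castLE] at this
  omega

lemma mapDomain_ι46_apply (d : Fin 4 →₀ ℕ) (i : Fin 4) :
    Finsupp.mapDomain ι46 d (ι46 i) = d i := Finsupp.mapDomain_apply ι46_inj d i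

lemma single_ι46 (u : ℕ) (j : Fin 6) (i : Fin 4) (h : j ≠ ι46 i) :
    (Finsupp.single j u) (ι46 i) = 0 := by
  rw [Finsupp.single_apply, if_neg h]

lemma ne4 : ∀ i : Fin 4, (4 : Fin 6) ≠ ι46 i := by decide
lemma ne5 : ∀ i : Fin 4, (5 : Fin 6) ≠ ι46 i := by decide

lemma e_decomp (e : Fin 6 →₀ ℕ) :
    e = Finsupp.mapDomain ι46 (res64 e) + Finsupp.single 4 (e 4) + Finsupp.single 5 (e 5) := by
  ext j
  rw [Finsupp.add_apply, Finsupp.add_apply]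
  fin_cases j
  · rw [show ((⟨0, by omega⟩ : Fin 6)) = ι46 0 by decide, mapDomain_ι46_apply, res64_apply,
      single_ι46 _ _ _ (by decide), single_ι46 _ _ _ (by decide)]
    simp
  · rw [show ((⟨1, by omega⟩ : Fin 6)) = ι46 1 by decide, mapDomain_ι46_apply, res64_apply,
      single_ι46 _ _ _ (by decide), single_ι46 _ _ _ (by decide)]
    simp
  · rw [show ((⟨2, by omega⟩ : Fin 6)) = ι46 2 by decide, mapDomain_ι46_apply, res64_apply,
      single_ι46 _ _ _ (by decide), single_ι46 _ _ _ (by decide)]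
    simp
  · rw [show ((⟨3, by omega⟩ : Fin 6)) = ι46 3 by decide, mapDomain_ι46_apply, res64_apply,
      single_ι46 _ _ _ (by decide), single_ι46 _ _ _ (by decide)]
    simp
  · rw [Finsupp.mapDomain_notin_range (f := ι46) (res64 e) _ (by exact_mod_cast not_mem_range4)]
    simp [Finsupp.single_apply]
  · rw [Finsupp.mapDomain_notin_range (f := ι46) (res64 e) _ (by exact_mod_cast not_mem_range5)]
    simp [Finsupp.single_apply]

lemma mon_split (e : Fin 6 →₀ ℕ) (c : ℚ) :
    (monomial e c : P6) = inc (monomial (res64 e) c) * X 4 ^ e 4 * X 5 ^ e 5 := by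
  rw [inc, rename_monomial, X_pow_eq_monomial, X_pow_eq_monomial, monomial_mul, monomial_mul,
    mul_one, mul_one]
  rw [← e_decomp]

lemma res64_decomp (d : Fin 4 →₀ ℕ) (u v : ℕ) :
    res64 (Finsupp.mapDomain ι46 d + Finsupp.single 4 u + Finsupp.single 5 v) = d := by
  ext i
  rw [res64_apply, Finsupp.add_apply, Finsupp.add_apply, mapDomain_ι46_apply,
    single_ι46 _ _ _ (ne4 i), single_ι46 _ _ _ (ne5 i)]
  simp

lemma comp_apply4 (d : Fin 4 →₀ ℕ) (u v : ℕ) :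
    (Finsupp.mapDomain ι46 d + Finsupp.single 4 u + Finsupp.single 5 v : Fin 6 →₀ ℕ) 4 = u := by
  rw [Finsupp.add_apply, Finsupp.add_apply,
    Finsupp.mapDomain_notin_range (f := ι46) d _ not_mem_range4]
  simp [Finsupp.single_apply]

lemma comp_apply5 (d : Fin 4 →₀ ℕ) (u v : ℕ) :
    (Finsupp.mapDomain ι46 d + Finsupp.single 4 u + Finsupp.single 5 v : Fin 6 →₀ ℕ) 5 = v := by
  rw [Finsupp.add_apply, Finsupp.add_apply,
    Finsupp.mapDomain_notin_range (f := ι46) d _ not_mem_range5]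
  simp [Finsupp.single_apply]

lemma Ext_inc (a b : ℕ) (q : P4) (u v : ℕ) :
    Ext a b (inc q * X 4 ^ u * X 5 ^ v) = if u = a ∧ v = b then q else 0 := by
  induction q using MvPolynomial.induction_on' with
  | monomial d c =>
      rw [inc, rename_monomial, X_pow_eq_monomial, X_pow_eq_monomial, monomial_mul, monomial_mul,
        mul_one, mul_one, Ext_monomial, comp_apply4, comp_apply5, res64_decomp]
  | add p q hp hq =>
      rw [map_add, add_mul, add_mul, Ext_add, hp, hq]
      split_ifs <;> simp

lemma v4_0 {α : Type*} (a b c d : α) : ![a,b,c,d] (0 : Fin 4) = a := rfl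
lemma v4_1 {α : Type*} (a b c d : α) : ![a,b,c,d] (1 : Fin 4) = b := rfl
lemma v4_2 {α : Type*} (a b c d : α) : ![a,b,c,d] (2 : Fin 4) = c := rfl
lemma v4_3 {α : Type*} (a b c d : α) : ![a,b,c,d] (3 : Fin 4) = d := rfl
lemma v6_0 {α : Type*} (a b c d e f : α) : ![a,b,c,d,e,f] (0 : Fin 6) = a := rfl
lemma v6_1 {α : Type*} (a b c d e f : α) : ![a,b,c,d,e,f] (1 : Fin 6) = b := rfl
lemma v6_2 {α : Type*} (a b c d e f : α) : ![a,b,c,d,e,f] (2 : Fin 6) = c := rfl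
lemma v6_3 {α : Type*} (a b c d e f : α) : ![a,b,c,d,e,f] (3 : Fin 6) = d := rfl
lemma v6_4 {α : Type*} (a b c d e f : α) : ![a,b,c,d,e,f] (4 : Fin 6) = e := rfl
lemma v6_5 {α : Type*} (a b c d e f : α) : ![a,b,c,d,e,f] (5 : Fin 6) = f := rfl
lemma i460 : ι46 0 = 0 := rfl
lemma i461 : ι46 1 = 1 := rfl
lemma i462 : ι46 2 = 2 := rfl
lemma i463 : ι46 3 = 3 := rfl

lemma sg6_inc (A : Matrix (Fin 2) (Fin 2) ℤ) (q : P4) : sg6 A (inc q) = inc (sg A A q) := by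
  have h : (sg6 A).comp inc = inc.comp (sg A A) := by
    refine algHom_ext fun i => ?_
    have hi : i = 0 ∨ i = 1 ∨ i = 2 ∨ i = 3 := by omega
    rcases hi with rfl | rfl | rfl | rfl <;>
      simp only [AlgHom.coe_comp, Function.comp_apply, inc, rename_X, rename_C, i460, i461, i462,
        i463, sg6, sg, aeval_X, map_add, map_mul, v4_0, v4_1, v4_2, v4_3,
        v6_0, v6_1, v6_2, v6_3, v6_4, v6_5, aeval_C, MvPolynomial.algebraMap_eq]
  exact congrFun (congrArg DFunLike.coe h) q

lemma tau_sg (A : Matrix (Fin 2) (Fin 2) ℤ) (R : P4) : tau (sg A A R) = sg6 A (tau R) := by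
  have h : tau.comp (sg A A) = (sg6 A).comp tau := by
    refine algHom_ext fun i => ?_
    have hi : i = 0 ∨ i = 1 ∨ i = 2 ∨ i = 3 := by omega
    rcases hi with rfl | rfl | rfl | rfl <;>
    · simp only [AlgHom.coe_comp, Function.comp_apply,
        sg6, sg, tau, aeval_X, map_add, map_mul, v4_0, v4_1, v4_2, v4_3,
        v6_0, v6_1, v6_2, v6_3, v6_4, v6_5, aeval_C, MvPolynomial.algebraMap_eq]
      try ring
  exact congrFun (congrArg DFunLike.coe h) R

lemma dg6_inc (q : P4) : dg6 (inc q) = inc (dg4 q) := by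
  have h : dg6.comp inc = inc.comp dg4 := by
    refine algHom_ext fun i => ?_
    have hi : i = 0 ∨ i = 1 ∨ i = 2 ∨ i = 3 := by omega
    rcases hi with rfl | rfl | rfl | rfl <;>
      simp only [AlgHom.coe_comp, Function.comp_apply, inc, rename_X, i460, i461, i462, i463,
        dg6, dg4, aeval_X, v4_0, v4_1, v4_2, v4_3, v6_0, v6_1, v6_2, v6_3, v6_4, v6_5]
  exact congrFun (congrArg DFunLike.coe h) q

lemma dg6_4 : dg6 (X 4) = X 4 := by simp only [dg6, aeval_X, v6_4]
lemma dg6_5 : dg6 (X 5) = X 5 := by simp only [dg6, aeval_X, v6_5]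
lemma sg6_4 (A : Matrix (Fin 2) (Fin 2) ℤ) : sg6 A (X 4) = X 4 := by
  simp only [sg6, aeval_X, v6_4]
lemma sg6_5 (A : Matrix (Fin 2) (Fin 2) ℤ) : sg6 A (X 5) = X 5 := by
  simp only [sg6, aeval_X, v6_5]

lemma Ext_sg6 (a b : ℕ) (A : Matrix (Fin 2) (Fin 2) ℤ) (R : P6) :
    Ext a b (sg6 A R) = sg A A (Ext a b R) := by
  have h1 : sg6 A R = ∑ e ∈ R.support, sg6 A (monomial e (coeff e R)) := by
    rw [← map_sum]; exact congrArg _ (as_sum R)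
  have h2 : Ext a b R = ∑ e ∈ R.support, Ext a b (monomial e (coeff e R)) := by
    rw [← Ext_sum]; exact congrArg _ (as_sum R)
  rw [h1, Ext_sum, h2, map_sum]
  refine Finset.sum_congr rfl fun e he => ?_
  rw [Ext_monomial, mon_split, map_mul, map_mul, map_pow, map_pow, sg6_4, sg6_5, sg6_inc,
    Ext_inc]
  split_ifs with h
  · rfl
  · rw [map_zero]

lemma Ext_dg6 (a b : ℕ) (R : P6) : Ext a b (dg6 R) = dg4 (Ext a b R) := by
  have h1 : dg6 R = ∑ e ∈ R.support, dg6 (monomial e (coeff e R)) := by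
    rw [← map_sum]; exact congrArg _ (as_sum R)
  have h2 : Ext a b R = ∑ e ∈ R.support, Ext a b (monomial e (coeff e R)) := by
    rw [← Ext_sum]; exact congrArg _ (as_sum R)
  rw [h1, Ext_sum, h2, map_sum]
  refine Finset.sum_congr rfl fun e he => ?_
  rw [Ext_monomial, mon_split, map_mul, map_mul, map_pow, map_pow, dg6_4, dg6_5, dg6_inc,
    Ext_inc]
  split_ifs with h
  · rfl
  · rw [map_zero]

lemma dg6_tau {m : ℕ} {R : P4} (h : IsBi m 0 R) :
    dg6 (tau R) = (X 4 + X 5) ^ m * inc R := by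
  have h1 : dg6 (tau R) = ∑ e ∈ R.support, dg6 (tau (monomial e (coeff e R))) := by
    rw [← map_sum, ← map_sum]; exact congrArg _ (congrArg _ (as_sum R))
  have h2 : inc R = ∑ e ∈ R.support, inc (monomial e (coeff e R)) := by
    rw [← map_sum]; exact congrArg _ (as_sum R)
  rw [h1, h2, Finset.mul_sum]
  refine Finset.sum_congr rfl fun e he => ?_
  obtain ⟨hb1, hb2⟩ := h e he
  have he2 : e 2 = 0 := by omega
  have he3 : e 3 = 0 := by omega
  rw [mon4, he2, he3, pow_zero, pow_zero, mul_one, mul_one]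
  simp only [map_mul, map_pow, tau, aeval_X, v4_0, v4_1, aeval_C, MvPolynomial.algebraMap_eq,
    dg6, v6_0, v6_1, v6_2, v6_3, v6_4, v6_5, map_add, inc, rename_X, rename_C, i460, i461]
  rw [show (X 4 * X 0 + X 5 * X 0 : P6) = (X 4 + X 5) * X 0 by ring,
    show (X 4 * X 1 + X 5 * X 1 : P6) = (X 4 + X 5) * X 1 by ring,
    mul_pow, mul_pow, show m = e 0 + e 1 by omega, pow_add]
  ring

def Trip (R : P6) : Prop := ∀ e ∈ R.support, e 0 + e 1 = e 4 ∧ e 2 + e 3 = e 5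

lemma trip_zero : Trip 0 := by intro e he; simp at he

lemma trip_add {R R' : P6} (h : Trip R) (h' : Trip R') : Trip (R + R') := by
  intro e he
  classical
  rcases Finset.mem_union.1 (support_add he) with hh | hh
  · exact h _ hh
  · exact h' _ hh

lemma trip_sum {α : Type*} {s : Finset α} {f : α → P6} (h : ∀ a ∈ s, Trip (f a)) :
    Trip (∑ a ∈ s, f a) := by
  classical
  induction s using Finset.induction_on with
  | empty => simpa using trip_zero
  | @insert a s ha ih =>
      rw [Finset.sum_insert ha]
      exact trip_add (h a (Finset.mem_insert_self a s))
        (ih fun b hb => h b (Finset.mem_insert_of_mem hb))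

lemma trip_mul {R R' : P6} (h : Trip R) (h' : Trip R') : Trip (R * R') := by
  intro e he
  classical
  obtain ⟨b, hb, c, hc, rfl⟩ := Finset.mem_add.1 (support_mul R R' he)
  obtain ⟨hb1, hb2⟩ := h b hb
  obtain ⟨hc1, hc2⟩ := h' c hc
  constructor <;> simp only [Finsupp.add_apply] <;> omega

lemma trip_monomial (e : Fin 6 →₀ ℕ) (c : ℚ) (h1 : e 0 + e 1 = e 4) (h2 : e 2 + e 3 = e 5) :
    Trip (monomial e c : P6) := by
  intro f hf
  classical
  have hm := support_monomial (s := e) (a := c) ▸ hf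
  rcases eq_or_ne c 0 with rfl | hc
  · simp at hm
  · simp [hc] at hm; subst hm; exact ⟨h1, h2⟩

lemma trip_C (c : ℚ) : Trip (C c : P6) := by
  rw [C_apply]
  exact trip_monomial 0 c (by simp) (by simp)

lemma trip_pow {R : P6} (h : Trip R) (n : ℕ) : Trip (R ^ n) := by
  induction n with
  | zero => simpa using trip_C 1
  | succ n ih => rw [pow_succ]; exact trip_mul ih h

lemma mon6 (e : Fin 6 →₀ ℕ) (c : ℚ) :
    (monomial e c : P6) = C c * X 0 ^ e 0 * X 1 ^ e 1 * X 2 ^ e 2 * X 3 ^ e 3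
      * X 4 ^ e 4 * X 5 ^ e 5 := by
  rw [monomial_eq, Finsupp.prod_pow, Fin.prod_univ_six]; ring

lemma trip_T0 : Trip (X 4 * X 0 + X 5 * X 2 : P6) := by
  have h1 : (X 4 * X 0 : P6) = monomial (Finsupp.equivFunOnFinite.symm ![1,0,0,0,1,0]) 1 := by
    rw [mon6]; simp [equivFun_apply, v6_0, v6_1, v6_2, v6_3, v6_4, v6_5]; ring
  have h2 : (X 5 * X 2 : P6) = monomial (Finsupp.equivFunOnFinite.symm ![0,0,1,0,0,1]) 1 := by
    rw [mon6]; simp [equivFun_apply, v6_0, v6_1, v6_2, v6_3, v6_4, v6_5]; ring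
  rw [h1, h2]
  exact trip_add (trip_monomial _ _ (by simp [equivFun_apply, v6_0, v6_1, v6_2, v6_3, v6_4, v6_5]) (by simp [equivFun_apply, v6_0, v6_1, v6_2, v6_3, v6_4, v6_5]))
    (trip_monomial _ _ (by simp [equivFun_apply, v6_0, v6_1, v6_2, v6_3, v6_4, v6_5]) (by simp [equivFun_apply, v6_0, v6_1, v6_2, v6_3, v6_4, v6_5]))

lemma trip_T1 : Trip (X 4 * X 1 + X 5 * X 3 : P6) := by
  have h1 : (X 4 * X 1 : P6) = monomial (Finsupp.equivFunOnFinite.symm ![0,1,0,0,1,0]) 1 := by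
    rw [mon6]; simp [equivFun_apply, v6_0, v6_1, v6_2, v6_3, v6_4, v6_5]; ring
  have h2 : (X 5 * X 3 : P6) = monomial (Finsupp.equivFunOnFinite.symm ![0,0,0,1,0,1]) 1 := by
    rw [mon6]; simp [equivFun_apply, v6_0, v6_1, v6_2, v6_3, v6_4, v6_5]; ring
  rw [h1, h2]
  exact trip_add (trip_monomial _ _ (by simp [equivFun_apply, v6_0, v6_1, v6_2, v6_3, v6_4, v6_5]) (by simp [equivFun_apply, v6_0, v6_1, v6_2, v6_3, v6_4, v6_5]))
    (trip_monomial _ _ (by simp [equivFun_apply, v6_0, v6_1, v6_2, v6_3, v6_4, v6_5]) (by simp [equivFun_apply, v6_0, v6_1, v6_2, v6_3, v6_4, v6_5]))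

lemma trip_tau {m : ℕ} {R : P4} (h : IsBi m 0 R) : Trip (tau R) := by
  have h1 : tau R = ∑ e ∈ R.support, tau (monomial e (coeff e R)) := by
    rw [← map_sum]; exact congrArg _ (as_sum R)
  rw [h1]
  refine trip_sum fun e he => ?_
  obtain ⟨hb1, hb2⟩ := h e he
  have he2 : e 2 = 0 := by omega
  have he3 : e 3 = 0 := by omega
  rw [mon4, he2, he3, pow_zero, pow_zero, mul_one, mul_one]
  simp only [map_mul, map_pow, tau, aeval_X, v4_0, v4_1, aeval_C, MvPolynomial.algebraMap_eq]
  exact trip_mul (trip_mul (trip_C _) (trip_pow trip_T0 _)) (trip_pow trip_T1 _)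

lemma Ext_def (a b : ℕ) (R : P6) : Ext a b R
    = ∑ e ∈ R.support, if e 4 = a ∧ e 5 = b then monomial (res64 e) (coeff e R) else 0 := rfl

lemma isBi_Ext {a b : ℕ} {R : P6} (h : Trip R) : IsBi a b (Ext a b R) := by
  rw [Ext_def]
  refine isBi_sum fun e he => ?_
  obtain ⟨h1, h2⟩ := h e he
  split_ifs with hc
  · obtain ⟨hc4, hc5⟩ := hc
    refine isBi_congr (isBi_monomial (res64 e) (coeff e R)) ?_ ?_
    · rw [res64_apply, res64_apply, i460, i461]; omega
    · rw [res64_apply, res64_apply, i462, i463]; omega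
  · exact isBi_zero a b

lemma inc_C (c : ℚ) : inc (C c) = C c := rename_C _ c

lemma Ext_binom (a b : ℕ) (R : P4) :
    Ext a b ((X 4 + X 5) ^ (a + b) * inc R) = C (((a + b).choose a : ℚ)) * R := by
  rw [add_pow, Finset.sum_mul, Ext_sum]
  have hterm : ∀ j ∈ Finset.range (a + b + 1),
      Ext a b (X 4 ^ j * X 5 ^ (a + b - j) * ((a + b).choose j : P6) * inc R)
        = if j = a ∧ a + b - j = b then C (((a + b).choose j : ℚ)) * R else 0 := by
    intro j hj
    have hre : (X 4 ^ j * X 5 ^ (a + b - j) * ((a + b).choose j : P6) * inc R : P6)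
        = inc (C (((a + b).choose j : ℚ)) * R) * X 4 ^ j * X 5 ^ (a + b - j) := by
      rw [map_mul, inc_C, C_eq_coe_nat]
      ring
    rw [hre, Ext_inc]
  rw [Finset.sum_congr rfl hterm, Finset.sum_eq_single a]
  · rw [if_pos ⟨rfl, by omega⟩]
  · intro j hj hja
    rw [if_neg (fun hcon => hja hcon.1)]
  · intro hna
    exact absurd (Finset.mem_range.2 (by omega)) hna

def Pol (a b : ℕ) (W : P2) : P4 :=
  C ((((a + b).choose a : ℚ))⁻¹) * Ext a b (tau (hm (a + b) 0 W))

lemma Pol_add (a b : ℕ) (W W' : P2) : Pol a b (W + W') = Pol a b W + Pol a b W' := by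
  rw [Pol, hm_add, map_add, Ext_add, mul_add]; rfl

lemma Pol_zero (a b : ℕ) : Pol a b 0 = 0 := by
  rw [Pol, hm_zero, map_zero, Ext_zero, mul_zero]

lemma isBi_Pol {a b : ℕ} {W : P2} (hW0 : degreeOf 0 W ≤ a + b) (hW1 : degreeOf 1 W ≤ 0) :
    IsBi a b (Pol a b W) :=
  isBi_congr (isBi_mul (isBi_C _) (isBi_Ext (trip_tau (isBi_hm hW0 hW1)))) (by omega) (by omega)

lemma sg_C (A B : Matrix (Fin 2) (Fin 2) ℤ) (c : ℚ) : sg A B (C c) = C c := by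
  rw [show (C c : P4) = algebraMap ℚ P4 c from (MvPolynomial.algebraMap_eq ℚ (Fin 4)).symm ▸ rfl]
  exact (sg A B).commutes c

lemma dg4_C (c : ℚ) : dg4 (C c) = C c := by
  rw [show (C c : P4) = algebraMap ℚ P4 c from (MvPolynomial.algebraMap_eq ℚ (Fin 4)).symm ▸ rfl]
  exact dg4.commutes c

lemma choose_ne (a b : ℕ) : (((a + b).choose a : ℚ)) ≠ 0 := by
  have h := Nat.choose_pos (show a ≤ a + b by omega)
  exact Nat.cast_ne_zero.2 h.ne'

lemma dg4_Pol {a b : ℕ} {W : P2} (hW0 : degreeOf 0 W ≤ a + b) (hW1 : degreeOf 1 W ≤ 0) :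
    dg4 (Pol a b W) = hm (a + b) 0 W := by
  rw [Pol, map_mul, dg4_C, ← Ext_dg6, dg6_tau (isBi_hm hW0 hW1), Ext_binom, ← mul_assoc,
    ← C_mul, inv_mul_cancel₀ (choose_ne a b), C_1, one_mul]

lemma diag_Pol {a b : ℕ} {W : P2} (hW0 : degreeOf 0 W ≤ a + b) (hW1 : degreeOf 1 W ≤ 0) :
    diagRes (pr (Pol a b W)) = W := by
  rw [diag_pr, dg4_Pol hW0 hW1, pr_hm]

lemma sg_Pol (A : Matrix (Fin 2) (Fin 2) ℤ) {a b : ℕ} {W : P2}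
    (hW0 : degreeOf 0 W ≤ a + b) (hW1 : degreeOf 1 W ≤ 0) :
    sg A A (Pol a b W) = Pol a b (slashVar 0 (a + b) A W) := by
  have hH : IsBi (a + b) 0 (hm (a + b) 0 W) := isBi_hm hW0 hW1
  have h1 : slashVar 0 (a + b) A W = pr (sg A A (hm (a + b) 0 W)) := by
    rw [slashVar, if_pos rfl, slash2_eq,
      sg_blockfree A 1 A (fun e he => by obtain ⟨_, hz⟩ := hH e he; omega)]
  have h2 : hm (a + b) 0 (slashVar 0 (a + b) A W) = sg A A (hm (a + b) 0 W) :=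
    hm_eq_of (isBi_sg A A hH) h1.symm
  rw [Pol, Pol, h2, map_mul, sg_C, tau_sg, Ext_sg6]

lemma part5 {k₁ k₂ : ℕ} (hk₁ : 4 ≤ k₁) (hk₂ : 4 ≤ k₂) (W : P2)
    (hW : memW1 0 (k₁ + k₂ - 2) W) : ∃ Q : P2, memVID k₁ k₂ Q ∧ diagRes Q = W := by
  obtain ⟨hov, hdeg, hSW, hUW⟩ := hW
  have em : k₁ + k₂ - 2 - 2 = (k₁ - 2) + (k₂ - 2) := by omega
  rw [em] at hdeg hSW hUW
  have hW1 : degreeOf 1 W ≤ 0 := le_of_eq (hov 1 (by decide))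
  have hbp := isBi_Pol (a := k₁ - 2) (b := k₂ - 2) hdeg hW1
  refine ⟨pr (Pol (k₁ - 2) (k₂ - 2) W), ⟨⟨?_, ?_⟩, ?_, ?_⟩, ?_⟩
  · exact (degreeOf_pr hbp).1
  · exact (degreeOf_pr hbp).2
  · rw [slash2_eq, hm_pr_of_isBi hbp, sg_Pol Smat hdeg hW1, ← map_add, ← Pol_add, hSW,
      Pol_zero, map_zero]
  · rw [slash2_eq, slash2_eq, hm_pr_of_isBi hbp, sg_Pol Umat hdeg hW1,
      sg_Pol (Umat * Umat) hdeg hW1, ← map_add, ← map_add, ← Pol_add, ← Pol_add, hUW,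
      Pol_zero, map_zero]
  · exact diag_Pol hdeg hW1
end Aux17

/-- exactness of
`0 → V_{k₁−1,k₂−1}[I_D] → V_{k₁,k₂}[I_D] → W_{k₁+k₂−2} → 0`,
the first map being multiplication by `X₁−X₂` and the second restriction to the diagonal. -/
theorem statement17 (k₁ k₂ : ℕ) (hk₁ : 4 ≤ k₁) (he₁ : Even k₁) (hk₂ : 4 ≤ k₂) (he₂ : Even k₂) :
    -- the first map is well defined
    (∀ P : MvPolynomial (Fin 2) ℚ, memVID (k₁ - 1) (k₂ - 1) P →
      memVID k₁ k₂ ((X 0 - X 1) * P)) ∧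
    -- the first map is injective
    (∀ P Q : MvPolynomial (Fin 2) ℚ, memVID (k₁ - 1) (k₂ - 1) P →
      memVID (k₁ - 1) (k₂ - 1) Q → (X 0 - X 1) * P = (X 0 - X 1) * Q → P = Q) ∧
    -- the second map is well defined
    (∀ P : MvPolynomial (Fin 2) ℚ, memVID k₁ k₂ P →
      memW1 0 (k₁ + k₂ - 2) (diagRes P)) ∧
    -- exactness in the middle
    (∀ Q : MvPolynomial (Fin 2) ℚ, memVID k₁ k₂ Q →
      (diagRes Q = 0 ↔ ∃ P : MvPolynomial (Fin 2) ℚ,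
        memVID (k₁ - 1) (k₂ - 1) P ∧ Q = (X 0 - X 1) * P)) ∧
    -- the second map is surjective
    (∀ W : MvPolynomial (Fin 2) ℚ, memW1 0 (k₁ + k₂ - 2) W →
      ∃ Q : MvPolynomial (Fin 2) ℚ, memVID k₁ k₂ Q ∧ diagRes Q = W) := by
  exact ⟨fun P hP => Aux17.part1 hk₁ hk₂ P hP,
         fun P Q _ _ h => Aux17.part2 P Q h,
         fun P hP => Aux17.part3 hk₁ hk₂ P hP,
         fun Q hQ => Aux17.part4 hk₁ hk₂ Q hQ,
         fun W hW => Aux17.part5 hk₁ hk₂ W hW⟩
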